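/- arXiv:1002.3447 — 3 statements merged into one kernel-verified Lean document; each statement's English description precedes it below -/
import Mathlib

section
/- Let q ≥ 2 be a prime power and d ≥ 1. Any set of (d+1)(q−1)+1 points in ℝ^d can be partitioned into q pairwise disjoint subsets F_1, F_2, …, F_q such that conv(F_1) ∩ conv(F_2) ∩ … ∩ conv(F_q) ≠ ∅ (Tverberg's theorem for prime powers). -/
open Finset Metric
open scoped RealInnerProductSpace

variable {E : Type*} [NormedAddCommGroup E] [InnerProductSpace ℝ E]

lemma tv_closer {x u : E} (hxu : ⟪x, u⟫ < 0) :
    ∃ s : ℝ, 0 < s ∧ s ≤ 1 ∧ ‖x + s • u‖ < ‖x‖ := by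
  have hu : u ≠ 0 := by rintro rfl; simp at hxu
  have hu2 : (0:ℝ) < ‖u‖ ^ 2 := pow_pos (norm_pos_iff.2 hu) 2
  set s : ℝ := min 1 (-⟪x, u⟫ / ‖u‖ ^ 2) with hs
  have hspos : 0 < s := lt_min one_pos (div_pos (by linarith) hu2)
  refine ⟨s, hspos, min_le_left _ _, ?_⟩
  have h1 : s * ‖u‖ ^ 2 ≤ -⟪x, u⟫ := by
    rw [← le_div_iff₀ hu2]; exact min_le_right _ _
  have hsq : ‖x + s • u‖ ^ 2 < ‖x‖ ^ 2 := by
    rw [norm_add_sq_real, real_inner_smul_right, norm_smul, Real.norm_eq_abs, mul_pow, sq_abs]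
    nlinarith
  exact lt_of_pow_lt_pow_left₀ 2 (norm_nonneg x) hsq

lemma tv_exists_weights {V : Type*} [AddCommGroup V] [Module ℝ V] {ι : Type*} [Fintype ι]
    {c : ι → V} {x : V} (h : x ∈ convexHull ℝ (Set.range c)) :
    ∃ w : ι → ℝ, (∀ i, 0 ≤ w i) ∧ ∑ i, w i = 1 ∧ ∑ i, w i • c i = x := by
  classical
  rw [convexHull_range_eq_exists_affineCombination] at h
  obtain ⟨s, w, hw0, hw1, hx⟩ := h
  rw [s.affineCombination_eq_linear_combination _ _ hw1] at hx
  refine ⟨fun i => if i ∈ s then w i else 0, fun i => ?_, ?_, ?_⟩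
  · dsimp only; split
    · exact hw0 _ ‹_›
    · exact le_refl _
  · simp [Finset.sum_ite_mem, hw1]
  · rw [← hx]; simp [ite_smul, Finset.sum_ite_mem]

lemma tv_shift {V : Type*} [AddCommGroup V] [Module ℝ V] {n : ℕ} {c : Fin n → V} {x : V}
    {μ ν : Fin n → ℝ} (hμ0 : ∀ i, 0 ≤ μ i) (hμ1 : ∑ i, μ i = 1) (hμx : ∑ i, μ i • c i = x)
    (hν1 : ∑ i, ν i = 0) (hνc : ∑ i, ν i • c i = 0) (hpos : ∃ i, 0 < ν i) :
    ∃ (w : Fin n → ℝ) (i₀ : Fin n),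
      (∀ i, 0 ≤ w i) ∧ ∑ i, w i = 1 ∧ ∑ i, w i • c i = x ∧ w i₀ = 0 := by
  classical
  obtain ⟨i₁, hi₁⟩ := hpos
  have hne : (univ.filter (fun i => 0 < ν i)).Nonempty := ⟨i₁, by simpa using hi₁⟩
  obtain ⟨i₀, hi₀mem, hi₀min⟩ := Finset.exists_min_image _ (fun i => μ i / ν i) hne
  have hνi₀ : 0 < ν i₀ := by simpa using hi₀mem
  set t : ℝ := μ i₀ / ν i₀ with ht
  have ht0 : 0 ≤ t := div_nonneg (hμ0 i₀) hνi₀.le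
  refine ⟨fun i => μ i - t * ν i, i₀, ?_, ?_, ?_, ?_⟩
  · intro i
    dsimp only
    rcases le_or_gt (ν i) 0 with h | h
    · have : t * ν i ≤ 0 := mul_nonpos_of_nonneg_of_nonpos ht0 h
      linarith [hμ0 i]
    · have h2 := hi₀min i (by simpa using h)
      rw [ht, div_le_div_iff₀ hνi₀ h] at h2
      have : t * ν i ≤ μ i := by
        rw [ht, div_mul_eq_mul_div, div_le_iff₀ hνi₀]
        linarith
      linarith
  · simp only [sub_eq_add_neg]
    rw [Finset.sum_add_distrib]
    simp [hμ1, ← Finset.mul_sum, hν1]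
  · have : ∀ i, (μ i - t * ν i) • c i = μ i • c i - t • (ν i • c i) := by
      intro i; rw [sub_smul, smul_smul]
    simp_rw [this]
    rw [Finset.sum_sub_distrib, ← Finset.smul_sum, hνc, hμx, smul_zero, sub_zero]
  · dsimp only
    rw [ht, div_mul_eq_mul_div, mul_div_assoc, div_self hνi₀.ne', mul_one, sub_self]

theorem tv_colorful {n : ℕ} [FiniteDimensional ℝ E] (hn : Module.finrank ℝ E < n)
    (S : Fin n → Finset E) (hS : ∀ i, (0:E) ∈ convexHull ℝ (↑(S i) : Set E)) :
    ∃ c : Fin n → E, (∀ i, c i ∈ S i) ∧ (0:E) ∈ convexHull ℝ (Set.range c) := by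
  classical
  have hnpos : 0 < n := lt_of_le_of_lt (Nat.zero_le _) hn
  haveI : NeZero n := ⟨hnpos.ne'⟩
  have : Nonempty (Fin n) := ⟨⟨0, hnpos⟩⟩
  have hne : ∀ i, (S i).Nonempty := by
    intro i
    have h := (convexHull_nonempty_iff (𝕜 := ℝ)).mp ⟨0, hS i⟩
    obtain ⟨y, hy⟩ := h
    exact ⟨y, by exact_mod_cast hy⟩
  have hnon : Nonempty (∀ i, {x // x ∈ S i}) :=
    ⟨fun i => ⟨(hne i).choose, (hne i).choose_spec⟩⟩
  obtain ⟨c₀, hc₀min⟩ := Finite.exists_min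
    (fun c : ∀ i, {x // x ∈ S i} => infDist 0 (convexHull ℝ (Set.range (fun i => (c i : E)))))
  set v : Fin n → E := fun i => (c₀ i : E) with hv
  set K : Set E := convexHull ℝ (Set.range v) with hK
  suffices h0 : (0:E) ∈ K from ⟨v, fun i => (c₀ i).2, h0⟩
  by_contra h0
  have hKfin : (Set.range v).Finite := Set.finite_range _
  have hKne : K.Nonempty := by
    rw [hK, convexHull_nonempty_iff]; exact Set.range_nonempty _
  obtain ⟨x, hxK, hxd⟩ := (hKfin.isCompact_convexHull ℝ).exists_infDist_eq_dist hKne 0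
  have hx0 : x ≠ 0 := fun h => h0 (h ▸ hxK)
  have hδpos : 0 < ‖x‖ := norm_pos_iff.mpr hx0
  have hfc₀ : infDist 0 K = ‖x‖ := by rw [hxd, dist_zero_left]
  -- nearest point characterization
  have hnear : ∀ w ∈ K, ‖x‖ ^ 2 ≤ ⟪x, w⟫ := by
    intro w hw
    by_contra hlt
    push_neg at hlt
    have hneg : ⟪x, w - x⟫ < 0 := by
      have := real_inner_self_eq_norm_sq x
      rw [inner_sub_right]; linarith
    obtain ⟨s, hs0, hs1, hless⟩ := tv_closer hneg
    have hzK : x + s • (w - x) ∈ K := by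
      have h2 : x + s • (w - x) = (1 - s) • x + s • w := by
        rw [smul_sub, sub_smul, one_smul]; abel
      rw [h2]
      exact (convex_convexHull ℝ _) hxK hw (by linarith) hs0.le (by ring)
    have hge := infDist_le_dist_of_mem (x := (0:E)) hzK
    rw [dist_zero_left, hfc₀] at hge
    linarith
  -- a representation of x avoiding some color i₀
  have key : ∃ (w : Fin n → ℝ) (i₀ : Fin n),
      (∀ i, 0 ≤ w i) ∧ ∑ i, w i = 1 ∧ ∑ i, w i • v i = x ∧ w i₀ = 0 := by
    obtain ⟨μ, hμ0, hμ1, hμx⟩ := tv_exists_weights (hK ▸ hxK)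
    by_cases hall : ∀ i, 0 < μ i
    · have hinn : ∀ i, ⟪x, v i⟫ = ‖x‖ ^ 2 := by
        have hsum0 : ∑ i, μ i * (⟪x, v i⟫ - ‖x‖ ^ 2) = 0 := by
          have h1 : ∑ i, μ i * ⟪x, v i⟫ = ‖x‖ ^ 2 := by
            have : ⟪x, ∑ i, μ i • v i⟫ = ∑ i, μ i * ⟪x, v i⟫ := by
              rw [inner_sum]
              exact Finset.sum_congr rfl fun i _ => real_inner_smul_right _ _ _
            rw [hμx, real_inner_self_eq_norm_sq] at this
            exact this.symm
          have h2 : ∑ i, μ i * ‖x‖ ^ 2 = ‖x‖ ^ 2 := by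
            rw [← Finset.sum_mul, hμ1, one_mul]
          rw [Finset.sum_congr rfl fun i _ => mul_sub (μ i) _ _, Finset.sum_sub_distrib, h1, h2,
            sub_self]
        have hnn : ∀ i ∈ (univ : Finset (Fin n)), 0 ≤ μ i * (⟪x, v i⟫ - ‖x‖ ^ 2) := by
          intro i _
          have hge := hnear (v i) (subset_convexHull ℝ _ (Set.mem_range_self i))
          exact mul_nonneg (hμ0 i) (by linarith)
        intro i
        have hterm := (Finset.sum_eq_zero_iff_of_nonneg hnn).mp hsum0 i (mem_univ i)
        have hge := hnear (v i) (subset_convexHull ℝ _ (Set.mem_range_self i))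
        have hμi := hall i
        nlinarith
      obtain ⟨g, hg, i₂, hgne⟩ := Fintype.not_linearIndependent_iff.mp
        (show ¬ LinearIndependent ℝ (fun i : Fin n => if i = 0 then x else v i - v 0) from
          fun h => by
            have hcard := h.fintype_card_le_finrank
            rw [Fintype.card_fin] at hcard
            omega)
      have hsplit : g 0 • x + ∑ i ∈ univ.erase 0, g i • (v i - v 0) = 0 := by
        rw [← hg, ← Finset.add_sum_erase univ
          (fun i => g i • (if i = 0 then x else v i - v 0)) (mem_univ (0 : Fin n))]
        rw [if_pos rfl]
        exact congrArg _ (Finset.sum_congr rfl fun i hi => by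
          rw [if_neg (Finset.mem_erase.mp hi).1])
      have hg0 : g 0 = 0 := by
        have h1 : ⟪x, g 0 • x + ∑ i ∈ univ.erase 0, g i • (v i - v 0)⟫ = 0 := by
          rw [hsplit, inner_zero_right]
        rw [inner_add_right, real_inner_smul_right, real_inner_self_eq_norm_sq, inner_sum] at h1
        have hz : ∀ i ∈ univ.erase (0 : Fin n), ⟪x, g i • (v i - v 0)⟫ = 0 := by
          intro i _
          rw [real_inner_smul_right, inner_sub_right, hinn, hinn, sub_self, mul_zero]
        rw [Finset.sum_congr rfl hz, Finset.sum_const_zero, add_zero] at h1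
        rcases mul_eq_zero.mp h1 with h | h
        · exact h
        · exact absurd h (by positivity)
      have herase : ∑ i ∈ univ.erase (0:Fin n), g i • v i
          = (∑ i ∈ univ.erase (0:Fin n), g i) • v 0 := by
        have h3 : ∑ i ∈ univ.erase (0:Fin n), g i • (v i - v 0) = 0 := by
          rw [hg0, zero_smul, zero_add] at hsplit; exact hsplit
        rw [Finset.sum_congr rfl (fun i _ => smul_sub (g i) (v i) (v 0)),
          Finset.sum_sub_distrib, sub_eq_zero] at h3
        rw [h3, Finset.sum_smul]
      set ν : Fin n → ℝ := fun i => if i = 0 then -∑ j ∈ univ.erase (0:Fin n), g j else g i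
        with hν
      have hνg : ∀ i ∈ univ.erase (0:Fin n), ν i = g i := by
        intro i hi
        simp only [hν]
        rw [if_neg (Finset.mem_erase.mp hi).1]
      have hν0 : ν 0 = -∑ j ∈ univ.erase (0:Fin n), g j := by
        simp only [hν, if_pos rfl]
      have hν1 : ∑ i, ν i = 0 := by
        rw [← Finset.add_sum_erase _ _ (mem_univ (0 : Fin n)), Finset.sum_congr rfl hνg, hν0]
        exact neg_add_cancel _
      have hνc : ∑ i, ν i • v i = 0 := by
        rw [← Finset.add_sum_erase _ _ (mem_univ (0 : Fin n)),
          Finset.sum_congr rfl (fun i hi => by rw [hνg i hi]), herase, hν0, neg_smul]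
        exact neg_add_cancel _
      have hi₂0 : i₂ ≠ 0 := fun h => hgne (h ▸ hg0)
      have hν₂ : ν i₂ ≠ 0 := by
        rw [hνg i₂ (Finset.mem_erase.mpr ⟨hi₂0, mem_univ _⟩)]; exact hgne
      by_cases hp : ∃ i, 0 < ν i
      · exact tv_shift hμ0 hμ1 hμx hν1 hνc hp
      · push_neg at hp
        have hp' : ∃ i, 0 < (-ν) i := by
          refine ⟨i₂, ?_⟩
          have := hp i₂
          simp only [Pi.neg_apply]
          rcases lt_or_eq_of_le this with h | h
          · linarith
          · exact absurd h hν₂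
        refine tv_shift hμ0 hμ1 hμx ?_ ?_ hp'
        · simp only [Pi.neg_apply]
          rw [Finset.sum_neg_distrib, hν1, neg_zero]
        · simp only [Pi.neg_apply, neg_smul]
          rw [Finset.sum_neg_distrib, hνc, neg_zero]

    · push_neg at hall
      obtain ⟨i₀, hi₀⟩ := hall
      exact ⟨μ, i₀, hμ0, hμ1, hμx, le_antisymm hi₀ (hμ0 i₀)⟩
  obtain ⟨w, i₀, hw0, hw1, hwx, hwi₀⟩ := key
  have hy : ∃ y ∈ S i₀, ⟪x, y⟫ ≤ 0 := by
    by_contra hno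
    push_neg at hno
    have hsub : (↑(S i₀) : Set E) ⊆ {z : E | 0 < ⟪x, z⟫} := fun z hz =>
      hno z (by exact_mod_cast hz)
    have hcvx2 : Convex ℝ {z : E | 0 < ⟪x, z⟫} :=
      convex_halfSpace_gt ⟨fun a b => inner_add_right _ _ _,
        fun r a => real_inner_smul_right _ _ _⟩ 0
    have hmem := convexHull_min hsub hcvx2 (hS i₀)
    simpa using hmem
  obtain ⟨y, hyS, hyx⟩ := hy
  set c₁ := Function.update c₀ i₀ (⟨y, hyS⟩ : {z // z ∈ S i₀}) with hc₁
  set v₁ : Fin n → E := fun i => (c₁ i : E) with hv₁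
  have hval1 : ∀ i, i ≠ i₀ → v₁ i = v i := by
    intro i hi
    rw [hv₁, hv, hc₁]; dsimp only
    rw [Function.update_of_ne hi]
  have hvali₀ : v₁ i₀ = y := by
    rw [hv₁, hc₁]; dsimp only
    rw [Function.update_self]
  have hxK' : x ∈ convexHull ℝ (Set.range v₁) := by
    have hsum : ∑ i ∈ univ.filter (· ≠ i₀), w i = 1 := by
      rw [← hw1]
      apply Finset.sum_subset (Finset.filter_subset _ _)
      intro i _ hi
      have hii : i = i₀ := by
        by_contra h
        exact hi (Finset.mem_filter.mpr ⟨mem_univ _, h⟩)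
      rw [hii, hwi₀]
    have hrep : ∑ i ∈ univ.filter (· ≠ i₀), w i • v₁ i = x := by
      have e1 : ∑ i ∈ univ.filter (· ≠ i₀), w i • v₁ i
          = ∑ i ∈ univ.filter (· ≠ i₀), w i • v i :=
        Finset.sum_congr rfl fun i hi => by rw [hval1 i (Finset.mem_filter.mp hi).2]
      rw [e1, ← hwx]
      apply Finset.sum_subset (Finset.filter_subset _ _)
      intro i _ hi
      have hii : i = i₀ := by
        by_contra h
        exact hi (Finset.mem_filter.mpr ⟨mem_univ _, h⟩)
      rw [hii, hwi₀, zero_smul]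
    rw [← hrep, ← Finset.centerMass_eq_of_sum_1 _ _ hsum]
    exact Finset.centerMass_mem_convexHull _ (fun i _ => hw0 i) (hsum ▸ one_pos)
      (fun i _ => Set.mem_range_self i)
  have hyK' : y ∈ convexHull ℝ (Set.range v₁) := subset_convexHull ℝ _ ⟨i₀, hvali₀⟩
  have hneg : ⟪x, y - x⟫ < 0 := by
    rw [inner_sub_right, real_inner_self_eq_norm_sq]
    nlinarith
  obtain ⟨s, hs0, hs1, hless⟩ := tv_closer hneg
  have hzK' : x + s • (y - x) ∈ convexHull ℝ (Set.range v₁) := by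
    have h2 : x + s • (y - x) = (1 - s) • x + s • y := by
      rw [smul_sub, sub_smul, one_smul]; abel
    rw [h2]
    exact (convex_convexHull ℝ _) hxK' hyK' (by linarith) hs0.le (by ring)
  have hle := infDist_le_dist_of_mem (x := (0:E)) hzK'
  rw [dist_zero_left] at hle
  have hge := hc₀min c₁
  rw [← hv₁] at hge
  rw [hfc₀] at hge
  linarith


lemma tv_sum_ite {q : ℕ} (g : Fin q → ℝ) (m : ℕ) (hm : m < q) :
    ∑ j : Fin q, (if (j:ℕ) = m then g j else 0) = g ⟨m, hm⟩ := by
  rw [Finset.sum_eq_single (⟨m, hm⟩ : Fin q)]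
  · rw [if_pos rfl]
  · intro j _ hj
    rw [if_neg (fun h => hj (Fin.ext h))]
  · intro h; exact absurd (mem_univ _) h

lemma tv_eu_sum_apply {ι : Type*} {κ : Type*} (s : Finset κ)
    (f : κ → EuclideanSpace ℝ ι) (r : ι) : (∑ k ∈ s, f k) r = ∑ k ∈ s, f k r := by
  classical
  induction s using Finset.cons_induction with
  | empty => simp
  | cons a s ha ih => rw [Finset.sum_cons, Finset.sum_cons, PiLp.add_apply, ih]

theorem stmt5 (q d : ℕ) (hq : IsPrimePow q) (hq2 : 2 ≤ q) (hd : 1 ≤ d)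
    (P : Finset (EuclideanSpace ℝ (Fin d))) (hP : P.card = (d + 1) * (q - 1) + 1) :
    ∃ F : Fin q → Set ↥P,
      (∀ i j, i ≠ j → Disjoint (F i) (F j)) ∧
      (⋃ i, F i) = Set.univ ∧
      (⋂ i, convexHull ℝ (Subtype.val '' F i)).Nonempty := by
  classical
  set n : ℕ := (d + 1) * (q - 1) + 1 with hn
  have hq0 : 0 < q := by omega
  have hq1 : q - 1 < q := by omega
  have hqR : (0:ℝ) < q := by exact_mod_cast hq0
  have hcard : Fintype.card ↥P = n := by rw [Fintype.card_coe]; exact hP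
  set e : ↥P ≃ Fin n := Fintype.equivFinOfCardEq hcard with he
  set a : Fin n → EuclideanSpace ℝ (Fin d) := fun i => ↑(e.symm i) with ha
  set b : Fin n → (Fin (d+1) → ℝ) := fun i => Fin.snoc (fun r => a i r) 1 with hb
  have hblast : ∀ i, b i (Fin.last d) = 1 := fun i => by
    simp only [hb]; rw [Fin.snoc_last]
  have hbcast : ∀ i r, b i (Fin.castSucc r) = a i r := fun i r => by
    simp only [hb]; rw [Fin.snoc_castSucc]
  set vq : Fin q → (Fin (q-1) → ℝ) := fun j k =>
    (if (j:ℕ) = (k:ℕ) then 1 else 0) - (if (j:ℕ) = q - 1 then 1 else 0) with hvq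
  set T : (Fin (d+1) → ℝ) → (Fin (q-1) → ℝ) → EuclideanSpace ℝ (Fin (d+1) × Fin (q-1)) :=
    fun f g => WithLp.toLp 2 (fun rk : Fin (d+1) × Fin (q-1) => f rk.1 * g rk.2) with hT
  set S : Fin n → Finset (EuclideanSpace ℝ (Fin (d+1) × Fin (q-1))) :=
    fun i => Finset.image (fun j : Fin q => T (b i) (vq j)) univ with hS
  have hvsum : ∀ k : Fin (q-1), ∑ j : Fin q, vq j k = 0 := by
    intro k
    have hk : (k:ℕ) < q := lt_trans k.2 hq1
    simp only [hvq]
    rw [Finset.sum_sub_distrib, tv_sum_ite (fun _ => (1:ℝ)) _ hk,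
      tv_sum_ite (fun _ => (1:ℝ)) _ hq1, sub_self]
  have hhull : ∀ i, (0 : EuclideanSpace ℝ (Fin (d+1) × Fin (q-1))) ∈ convexHull ℝ ↑(S i) := by
    intro i
    have hTz : ∑ j : Fin q, T (b i) (vq j) = 0 := by
      ext rk
      rw [tv_eu_sum_apply]
      have h1 : ∀ j : Fin q, T (b i) (vq j) rk = b i rk.1 * vq j rk.2 := fun j => rfl
      rw [Finset.sum_congr rfl fun j _ => h1 j, ← Finset.mul_sum, hvsum, mul_zero]
      rfl
    have hw : ∑ _j : Fin q, ((q:ℝ))⁻¹ = 1 := by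
      rw [Finset.sum_const, card_univ, Fintype.card_fin, nsmul_eq_mul,
        mul_inv_cancel₀ hqR.ne']
    have hz : ∀ j ∈ (univ : Finset (Fin q)), T (b i) (vq j) ∈ (↑(S i) : Set _) := by
      intro j _
      simp only [hS]
      exact Finset.mem_coe.mpr (Finset.mem_image_of_mem _ (mem_univ j))
    have hmem := Finset.centerMass_mem_convexHull (univ : Finset (Fin q))
      (w := fun _ => ((q:ℝ))⁻¹) (z := fun j => T (b i) (vq j))
      (fun j _ => by positivity) (by rw [hw]; exact one_pos) hz
    rwa [Finset.centerMass_eq_of_sum_1 _ _ hw, ← Finset.smul_sum, hTz, smul_zero] at hmem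
  have hfr : Module.finrank ℝ (EuclideanSpace ℝ (Fin (d+1) × Fin (q-1))) < n := by
    rw [finrank_euclideanSpace, Fintype.card_prod, Fintype.card_fin, Fintype.card_fin, hn]
    omega
  obtain ⟨c, hcS, hc0⟩ := tv_colorful hfr S hhull
  have hch : ∀ i, ∃ j : Fin q, T (b i) (vq j) = c i := by
    intro i
    have hm := hcS i
    rw [hS] at hm
    obtain ⟨j, _, hj⟩ := Finset.mem_image.mp hm
    exact ⟨j, hj⟩
  choose jdx hjdx using hch
  obtain ⟨lam, hl0, hl1, hlc⟩ := tv_exists_weights hc0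
  have hlc' : ∑ i, lam i • T (b i) (vq (jdx i)) = 0 := by
    rw [Finset.sum_congr rfl fun i _ => by rw [hjdx i]]; exact hlc
  set A : Fin q → Finset (Fin n) := fun m => univ.filter (fun i => jdx i = m) with hA
  set cw : Fin q → Fin (d+1) → ℝ := fun m r => ∑ i ∈ A m, lam i * b i r with hcw
  have hkey : ∀ (rk : Fin (d+1) × Fin (q-1)), ∑ m : Fin q, cw m rk.1 * vq m rk.2 = 0 := by
    intro rk
    have step1 : ∀ m : Fin q, cw m rk.1 * vq m rk.2
        = ∑ i ∈ A m, lam i * (b i rk.1 * vq (jdx i) rk.2) := by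
      intro m
      simp only [hcw]
      rw [Finset.sum_mul]
      refine Finset.sum_congr rfl fun i hi => ?_
      have hji : jdx i = m := by
        have := hi
        rw [hA] at this
        exact (Finset.mem_filter.mp this).2
      rw [hji]; ring
    rw [Finset.sum_congr rfl fun m _ => step1 m]
    have step2 : ∑ m : Fin q, ∑ i ∈ A m, lam i * (b i rk.1 * vq (jdx i) rk.2)
        = ∑ i : Fin n, lam i * (b i rk.1 * vq (jdx i) rk.2) := by
      simp only [hA]
      exact Finset.sum_fiberwise _ _ _
    rw [step2]
    have step3 : ∑ i : Fin n, lam i * (b i rk.1 * vq (jdx i) rk.2)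
        = (∑ i : Fin n, lam i • T (b i) (vq (jdx i))) rk := by
      rw [tv_eu_sum_apply]
      refine Finset.sum_congr rfl fun i _ => ?_
      rw [PiLp.smul_apply, smul_eq_mul]
    rw [step3, hlc']
    rfl
  have hcwall : ∀ m : Fin q, cw m = cw ⟨q-1, hq1⟩ := by
    intro m
    by_cases hm : (m:ℕ) = q - 1
    · exact congrArg cw (Fin.ext hm)
    · have hmlt : (m:ℕ) < q - 1 := by omega
      funext r
      have hk := hkey (r, ⟨(m:ℕ), hmlt⟩)
      have expand : ∀ m' : Fin q,
          cw m' r * vq m' ⟨(m:ℕ), hmlt⟩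
          = (if (m':ℕ) = (m:ℕ) then cw m' r else 0)
            - (if (m':ℕ) = q - 1 then cw m' r else 0) := by
        intro m'
        simp only [hvq]
        rw [mul_sub, mul_ite, mul_one, mul_zero, mul_ite, mul_one, mul_zero]
      rw [Finset.sum_congr rfl fun m' _ => expand m', Finset.sum_sub_distrib,
        tv_sum_ite (fun m' => cw m' r) _ m.2, tv_sum_ite (fun m' => cw m' r) _ hq1,
        sub_eq_zero] at hk
      have : (⟨(m:ℕ), m.2⟩ : Fin q) = m := Fin.ext rfl
      rw [this] at hk
      exact hk
  have hAsum : ∀ m, ∑ i ∈ A m, lam i = cw m (Fin.last d) := by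
    intro m
    simp only [hcw]
    exact Finset.sum_congr rfl fun i _ => by rw [hblast i, mul_one]
  have hconst : ∀ m, cw m (Fin.last d) = (q:ℝ)⁻¹ := by
    have hsumall : ∑ m : Fin q, cw m (Fin.last d) = 1 := by
      have : ∑ m : Fin q, ∑ i ∈ A m, lam i = ∑ i : Fin n, lam i := by
        simp only [hA]
        exact Finset.sum_fiberwise _ _ _
      rw [Finset.sum_congr rfl fun m _ => (hAsum m).symm, this, hl1]
    have hq' : ∑ m : Fin q, cw (⟨q-1, hq1⟩ : Fin q) (Fin.last d) = 1 := by
      rw [← hsumall]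
      exact Finset.sum_congr rfl fun m _ => by rw [hcwall m]
    rw [Finset.sum_const, card_univ, Fintype.card_fin, nsmul_eq_mul] at hq'
    intro m
    rw [hcwall m]
    field_simp at hq' ⊢
    linarith
  have hApos : ∀ m, 0 < ∑ i ∈ A m, lam i := by
    intro m
    rw [hAsum, hconst]
    positivity
  set F : Fin q → Set ↥P := fun m => {x : ↥P | jdx (e x) = m} with hF
  have hsame : ∀ m, ∑ i ∈ A m, lam i • a i = ∑ i ∈ A ⟨q-1, hq1⟩, lam i • a i := by
    intro m
    ext r
    rw [tv_eu_sum_apply, tv_eu_sum_apply]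
    have hcoord : ∀ m', ∑ i ∈ A m', (lam i • a i) r = cw m' (Fin.castSucc r) := by
      intro m'
      simp only [hcw]
      refine Finset.sum_congr rfl fun i _ => ?_
      rw [PiLp.smul_apply, smul_eq_mul, hbcast i r]
    rw [hcoord m, hcoord ⟨q-1, hq1⟩, hcwall m]
  set p : EuclideanSpace ℝ (Fin d) := (q:ℝ) • ∑ i ∈ A ⟨q-1, hq1⟩, lam i • a i with hp
  have hmem : ∀ m, p ∈ convexHull ℝ (Subtype.val '' F m) := by
    intro m
    have hwsum : ∑ i ∈ A m, (q:ℝ) * lam i = 1 := by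
      rw [← Finset.mul_sum, hAsum, hconst, mul_inv_cancel₀ hqR.ne']
    have hz : ∀ i ∈ A m, a i ∈ Subtype.val '' F m := by
      intro i hi
      refine ⟨e.symm i, ?_, rfl⟩
      simp only [hF, Set.mem_setOf_eq]
      rw [Equiv.apply_symm_apply]
      rw [hA] at hi
      exact (Finset.mem_filter.mp hi).2
    have hmem2 := Finset.centerMass_mem_convexHull (A m)
      (w := fun i => (q:ℝ) * lam i) (z := a)
      (fun i _ => mul_nonneg hqR.le (hl0 i)) (by rw [hwsum]; exact one_pos) hz
    rw [Finset.centerMass_eq_of_sum_1 _ _ hwsum] at hmem2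
    have hps : ∑ i ∈ A m, ((q:ℝ) * lam i) • a i = p := by
      rw [hp, ← hsame m, Finset.smul_sum]
      exact Finset.sum_congr rfl fun i _ => by rw [smul_smul]
    rwa [hps] at hmem2
  refine ⟨F, ?_, ?_, ⟨p, Set.mem_iInter.mpr hmem⟩⟩
  · intro i j hij
    rw [Set.disjoint_left]
    intro x hxi hxj
    rw [hF] at hxi hxj
    exact hij (hxi ▸ hxj ▸ rfl)
  · ext x
    simp only [Set.mem_iUnion, Set.mem_univ, iff_true]
    exact ⟨jdx (e x), rfl⟩
end

section
/- Let q ≥ 2, let G be a finite simple graph with more than m vertices, and let S_1, S_2, …, S_m be squids in G □ K_q with pairwise distinct bodies. If q > |N²(v)| + 2|N(v)| for every vertex v of G, then the set V(G □ K_q) ∖ (S_1 ∪ S_2 ∪ … ∪ S_m) is nonempty. -/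
/-- The set of vertices at distance exactly two from `v`:
`N²(v) = (⋃ u ∈ N(v), N(u)) \ (N(v) ∪ {v})`. -/
def distTwoSet {V : Type*} (G : SimpleGraph V) (v : V) : Set V :=
  (⋃ u ∈ G.neighborSet v, G.neighborSet u) \ (G.neighborSet v ∪ {v})

/-- A squid with body `w` in `G □ K_q`: a subset of `V(G) × {1,…,q}` contained either in
`(N_G(v) ∪ N_G(w)) × {i} ∪ {w} × {1,…,q}` for some vertex `v` adjacent to `w` and some
level `i` (type (i)), or in `N_G(w) × {i,j} ∪ {w} × {1,…,q}` for some levels `i < j`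
(type (ii)). -/
def IsSquid {V : Type*} (G : SimpleGraph V) (q : ℕ) (w : V) (S : Set (V × Fin q)) : Prop :=
  (∃ v, G.Adj v w ∧ ∃ i : Fin q,
    S ⊆ ((G.neighborSet v ∪ G.neighborSet w) ×ˢ {i}) ∪ ({w} ×ˢ (Set.univ : Set (Fin q)))) ∨
  (∃ i j : Fin q, i < j ∧
    S ⊆ (G.neighborSet w ×ˢ ({i, j} : Set (Fin q))) ∪ ({w} ×ˢ (Set.univ : Set (Fin q))))

theorem stmt9 {V : Type*} [Fintype V] (G : SimpleGraph V) (q m : ℕ) (hq : 2 ≤ q)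
    (hm : m < Fintype.card V)
    (w : Fin m → V) (S : Fin m → Set (V × Fin q))
    (hw : Function.Injective w)
    (hS : ∀ k, IsSquid G q (w k) (S k))
    (hdeg : ∀ v, (distTwoSet G v).ncard + 2 * (G.neighborSet v).ncard < q) :
    ((Set.univ : Set (V × Fin q)) \ ⋃ k, S k).Nonempty := by
  classical
  -- find a vertex u which is not a body
  obtain ⟨u, hu⟩ : ∃ u, u ∉ Set.range w := by
    by_contra h
    push_neg at h
    have h1 : (Set.univ : Set V) ⊆ Set.range w := fun x _ => h x
    have h2 := Set.ncard_le_ncard h1 (Set.finite_range w)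
    rw [Set.ncard_univ, Nat.card_eq_fintype_card] at h2
    have h3 : (Set.range w).ncard ≤ m := by
      rw [← Set.image_univ]
      calc (w '' Set.univ).ncard ≤ (Set.univ : Set (Fin m)).ncard :=
            Set.ncard_image_le Set.finite_univ
        _ = m := by simp [Set.ncard_univ]
    omega
  have hune : ∀ k, u ≠ w k := fun k h => hu ⟨k, h.symm⟩
  -- levels covered at u by each squid
  set A : Fin m → Set (Fin q) := fun k => {i | (u, i) ∈ S k} with hAdef
  have hA : ∀ k, A k = ∅ ∨ (G.Adj u (w k) ∧ (A k).ncard ≤ 2) ∨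
      (w k ∈ distTwoSet G u ∧ (A k).ncard ≤ 1) := by
    intro k
    by_cases hne : A k = ∅
    · exact Or.inl hne
    right
    obtain ⟨i0, hi0⟩ := Set.nonempty_iff_ne_empty.mpr hne
    rcases hS k with ⟨v, hvw, i, hsub⟩ | ⟨i, j, hij, hsub⟩
    · have hsub' : A k ⊆ {i} := by
        intro x hx
        rcases hsub hx with hx1 | hx2
        · exact hx1.2
        · exact absurd hx2.1 (hune k)
      have hcard : (A k).ncard ≤ 1 := by
        calc (A k).ncard ≤ ({i} : Set (Fin q)).ncard :=
              Set.ncard_le_ncard hsub' (Set.finite_singleton i)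
          _ = 1 := Set.ncard_singleton i
      rcases hsub hi0 with h1 | h2
      · rcases h1.1 with hv | hwk
        · by_cases hadj : G.Adj u (w k)
          · exact Or.inl ⟨hadj, hcard.trans one_le_two⟩
          · refine Or.inr ⟨⟨?_, ?_⟩, hcard⟩
            · exact Set.mem_biUnion (show v ∈ G.neighborSet u from (hv : G.Adj v u).symm) hvw
            · rintro (h | h)
              · exact hadj h
              · exact hune k (h : w k = u).symm
        · exact Or.inl ⟨(hwk : G.Adj (w k) u).symm, hcard.trans one_le_two⟩
      · exact absurd h2.1 (hune k)
    · have hsub' : A k ⊆ {i, j} := by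
        intro x hx
        rcases hsub hx with hx1 | hx2
        · exact hx1.2
        · exact absurd hx2.1 (hune k)
      have hcard : (A k).ncard ≤ 2 := by
        calc (A k).ncard ≤ ({i, j} : Set (Fin q)).ncard :=
              Set.ncard_le_ncard hsub' (Set.toFinite _)
          _ ≤ 2 := by
            have := Set.ncard_insert_le i ({j} : Set (Fin q))
            simpa [Set.ncard_singleton] using this
      rcases hsub hi0 with h1 | h2
      · exact Or.inl ⟨(h1.1 : G.Adj (w k) u).symm, hcard⟩
      · exact absurd h2.1 (hune k)
  -- counting
  set F1 : Finset (Fin m) := Finset.univ.filter (fun k => G.Adj u (w k)) with hF1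
  set F2 : Finset (Fin m) := Finset.univ.filter (fun k => w k ∈ distTwoSet G u) with hF2
  have hdisj : ∀ k, w k ∈ distTwoSet G u → ¬ G.Adj u (w k) := by
    intro k hk hadj
    exact hk.2 (Or.inl hadj)
  have hA1 : ∀ k, G.Adj u (w k) → (A k).ncard ≤ 2 := by
    intro k hadj
    rcases hA k with h | h | h
    · simp [h]
    · exact h.2
    · exact absurd hadj (hdisj k h.1)
  have hA2 : ∀ k, ¬ G.Adj u (w k) → w k ∈ distTwoSet G u → (A k).ncard ≤ 1 := by
    intro k hadj hd
    rcases hA k with h | h | h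
    · simp [h]
    · exact absurd h.1 hadj
    · exact h.2
  have hA0 : ∀ k, ¬ G.Adj u (w k) → w k ∉ distTwoSet G u → A k = ∅ := by
    intro k hadj hd
    rcases hA k with h | h | h
    · exact h
    · exact absurd h.1 hadj
    · exact absurd h.1 hd
  -- Finset versions
  set Af : Fin m → Finset (Fin q) := fun k => (A k).toFinite.toFinset with hAf
  have hAfcard : ∀ k, (Af k).card = (A k).ncard := by
    intro k
    rw [Set.ncard_eq_toFinset_card (A k) (A k).toFinite]
  set Tf : Finset (Fin q) := Finset.univ.biUnion Af with hTf
  have hsum : Tf.card ≤ ∑ k, (Af k).card := Finset.card_biUnion_le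
  have hsplit : ∑ k, (Af k).card =
      (∑ k ∈ F1, (Af k).card) + ∑ k ∈ Finset.univ.filter (fun k => ¬ G.Adj u (w k)), (Af k).card := by
    rw [hF1]
    exact (Finset.sum_filter_add_sum_filter_not _ _ _).symm
  have hb1 : ∑ k ∈ F1, (Af k).card ≤ 2 * F1.card := by
    rw [mul_comm]
    refine Finset.sum_le_card_nsmul _ _ 2 ?_
    intro k hk
    rw [hAfcard]
    exact hA1 k (by simpa [hF1] using hk)
  have hb2 : ∑ k ∈ Finset.univ.filter (fun k => ¬ G.Adj u (w k)), (Af k).card ≤ F2.card := by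
    set s := Finset.univ.filter (fun k => ¬ G.Adj u (w k)) with hs
    have step1 : ∑ k ∈ s, (Af k).card ≤ ∑ k ∈ s, (if w k ∈ distTwoSet G u then 1 else 0) := by
      refine Finset.sum_le_sum ?_
      intro k hk
      have hadj : ¬ G.Adj u (w k) := by simpa [hs] using hk
      by_cases hd : w k ∈ distTwoSet G u
      · simp only [hd, if_true]
        rw [hAfcard]
        exact hA2 k hadj hd
      · simp only [hd, if_false]
        rw [hAfcard, hA0 k hadj hd]
        simp
    have step2 : ∑ k ∈ s, (if w k ∈ distTwoSet G u then 1 else 0)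
        = (s.filter (fun k => w k ∈ distTwoSet G u)).card := (Finset.card_filter _ _).symm
    have step3 : (s.filter (fun k => w k ∈ distTwoSet G u)).card ≤ F2.card := by
      refine Finset.card_le_card ?_
      intro k hk
      simp only [hs, hF2, Finset.mem_filter, Finset.mem_univ, true_and] at hk ⊢
      exact hk.2
    omega
  have hc1 : F1.card ≤ (G.neighborSet u).ncard := by
    rw [Set.ncard_eq_toFinset_card _ (G.neighborSet u).toFinite]
    refine Finset.card_le_card_of_injOn w ?_ (fun a _ b _ hab => hw hab)
    intro k hk
    rw [Finset.mem_coe, Set.Finite.mem_toFinset]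
    exact (by simpa [hF1] using hk : G.Adj u (w k))
  have hc2 : F2.card ≤ (distTwoSet G u).ncard := by
    rw [Set.ncard_eq_toFinset_card _ (distTwoSet G u).toFinite]
    refine Finset.card_le_card_of_injOn w ?_ (fun a _ b _ hab => hw hab)
    intro k hk
    rw [Finset.mem_coe, Set.Finite.mem_toFinset]
    simpa [hF2] using hk
  have hTcard : Tf.card < q := by
    have hd := hdeg u
    have : Tf.card ≤ 2 * F1.card + F2.card := by omega
    omega
  obtain ⟨i, hi⟩ : ∃ i, i ∉ Tf := by
    by_contra h
    push_neg at h
    have heq : Tf = Finset.univ := Finset.eq_univ_iff_forall.mpr h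
    rw [heq, Finset.card_univ, Fintype.card_fin] at hTcard
    omega
  refine ⟨(u, i), Set.mem_univ _, ?_⟩
  simp only [Set.mem_iUnion, not_exists]
  intro k hk
  exact hi (Finset.mem_biUnion.mpr ⟨k, Finset.mem_univ k, (A k).toFinite.mem_toFinset.mpr hk⟩)
end

section
/- Let G be a finite simple graph with more than m vertices, let q ≥ 2 satisfy q > |N²(v)| + 2|N(v)| for every vertex v of G, let S_1, …, S_m be squids in G □ K_q with pairwise distinct bodies, and let v be a vertex of G that is not the body of any S_k. Suppose that among the squids S_1, …, S_m having at least one arm of the form (v, ·) there are a squids of type (i) whose body is not adjacent to v, b squids of type (i) whose body is adjacent to v, and c squids of type (ii). Then a + b + 2c ≤ |N²(v)| + 2|N(v)| < q; in particular the set {(v,1), (v,2), …, (v,q)} ∖ (S_1 ∪ … ∪ S_m) is nonempty. -/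
/-- A squid of type (i) with body `w` in `G □ K_q`: a subset of
`(N_G(v) ∪ N_G(w)) × {i} ∪ {w} × {1,…,q}` for some vertex `v` adjacent to `w`
and some level `i`. -/
def IsSquidI {V : Type*} (G : SimpleGraph V) (q : ℕ) (w : V) (S : Set (V × Fin q)) : Prop :=
  ∃ v, G.Adj v w ∧ ∃ i : Fin q,
    S ⊆ ((G.neighborSet v ∪ G.neighborSet w) ×ˢ {i}) ∪ ({w} ×ˢ (Set.univ : Set (Fin q)))

/-- A squid of type (ii) with body `w` in `G □ K_q`: a subset of
`N_G(w) × {i,j} ∪ {w} × {1,…,q}` for some levels `i < j`. -/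
def IsSquidII {V : Type*} (G : SimpleGraph V) (q : ℕ) (w : V) (S : Set (V × Fin q)) : Prop :=
  ∃ i j : Fin q, i < j ∧
    S ⊆ (G.neighborSet w ×ˢ ({i, j} : Set (Fin q))) ∪ ({w} ×ˢ (Set.univ : Set (Fin q)))

theorem stmt12 {V : Type*} [Fintype V] (G : SimpleGraph V) (q m : ℕ) (hq : 2 ≤ q)
    (hm : m < Fintype.card V)
    (w : Fin m → V) (S : Fin m → Set (V × Fin q))
    (hw : Function.Injective w)
    (typeI : Fin m → Prop)
    (hS : ∀ k, (typeI k → IsSquidI G q (w k) (S k)) ∧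
               (¬ typeI k → IsSquidII G q (w k) (S k)))
    (hdeg : ∀ v', (distTwoSet G v').ncard + 2 * (G.neighborSet v').ncard < q)
    (v : V) (hv : ∀ k, w k ≠ v)
    (a b c : ℕ)
    (ha : a = {k : Fin m | (∃ j, (v, j) ∈ S k) ∧ typeI k ∧ ¬ G.Adj (w k) v}.ncard)
    (hb : b = {k : Fin m | (∃ j, (v, j) ∈ S k) ∧ typeI k ∧ G.Adj (w k) v}.ncard)
    (hc : c = {k : Fin m | (∃ j, (v, j) ∈ S k) ∧ ¬ typeI k}.ncard) :
    (a + b + 2 * c ≤ (distTwoSet G v).ncard + 2 * (G.neighborSet v).ncard ∧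
      (distTwoSet G v).ncard + 2 * (G.neighborSet v).ncard < q) ∧
    (({v} ×ˢ (Set.univ : Set (Fin q))) \ ⋃ k, S k).Nonempty := by
  classical
  set A : Set (Fin m) := {k : Fin m | (∃ j, (v, j) ∈ S k) ∧ typeI k ∧ ¬ G.Adj (w k) v} with hAdef
  set B : Set (Fin m) := {k : Fin m | (∃ j, (v, j) ∈ S k) ∧ typeI k ∧ G.Adj (w k) v} with hBdef
  set C : Set (Fin m) := {k : Fin m | (∃ j, (v, j) ∈ S k) ∧ ¬ typeI k} with hCdef
  -- bodies of A-squids are at distance two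
  have hAsub : w '' A ⊆ distTwoSet G v := by
    rintro x ⟨k, ⟨⟨j, hj⟩, hI, hnadj⟩, rfl⟩
    obtain ⟨u, huw, i, hsub⟩ := (hS k).1 hI
    rcases hsub hj with h | h
    · rcases h.1 with hu | hwk
      · refine ⟨?_, ?_⟩
        · exact Set.mem_biUnion (show u ∈ G.neighborSet v from hu.symm) huw
        · rintro (hmem | hmem)
          · exact hnadj hmem.symm
          · exact hv k hmem
      · exact absurd hwk hnadj
    · exact absurd h.1.symm (hv k)
  -- bodies of B- and C-squids are neighbors of v
  have hBCsub : w '' (B ∪ C) ⊆ G.neighborSet v := by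
    rintro x ⟨k, hk, rfl⟩
    rcases hk with ⟨⟨j, hj⟩, _, hadj⟩ | ⟨⟨j, hj⟩, hnI⟩
    · exact hadj.symm
    · obtain ⟨i, i', _, hsub⟩ := (hS k).2 hnI
      rcases hsub hj with h | h
      · exact h.1.symm
      · exact absurd h.1.symm (hv k)
  have hCsub : w '' C ⊆ G.neighborSet v := fun x hx =>
    hBCsub (Set.image_mono (f := w) Set.subset_union_right hx)
  have ha' : a ≤ (distTwoSet G v).ncard := by
    rw [ha, ← Set.ncard_image_of_injective A hw]
    exact Set.ncard_le_ncard hAsub (Set.toFinite _)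
  have hdisjBC : Disjoint B C := by
    rw [Set.disjoint_left]
    rintro k ⟨_, hI, _⟩ ⟨_, hnI⟩
    exact hnI hI
  have hbc : b + c ≤ (G.neighborSet v).ncard := by
    rw [hb, hc, ← Set.ncard_union_eq hdisjBC (Set.toFinite _) (Set.toFinite _),
      ← Set.ncard_image_of_injective _ hw]
    exact Set.ncard_le_ncard hBCsub (Set.toFinite _)
  have hc' : c ≤ (G.neighborSet v).ncard := by
    rw [hc, ← Set.ncard_image_of_injective C hw]
    exact Set.ncard_le_ncard hCsub (Set.toFinite _)
  have part1 : a + b + 2 * c ≤ (distTwoSet G v).ncard + 2 * (G.neighborSet v).ncard := by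
    omega
  refine ⟨⟨part1, hdeg v⟩, ?_⟩
  by_contra hne
  rw [Set.not_nonempty_iff_eq_empty, Set.diff_eq_empty] at hne
  have hcov : ∀ j : Fin q, ∃ k, (v, j) ∈ S k := by
    intro j
    have := hne (show (v, j) ∈ ({v} : Set V) ×ˢ (Set.univ : Set (Fin q)) by simp)
    simpa using this
  set T : Fin m → Finset (Fin q) := fun k => Finset.univ.filter fun j => (v, j) ∈ S k with hTdef
  set K : Finset (Fin m) := Finset.univ.filter fun k => ∃ j, (v, j) ∈ S k with hKdef
  have hqK : q ≤ ∑ k ∈ K, (T k).card := by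
    calc q = (Finset.univ : Finset (Fin q)).card := by simp
    _ ≤ (K.biUnion T).card := by
        apply Finset.card_le_card
        intro j _
        obtain ⟨k, hk⟩ := hcov j
        refine Finset.mem_biUnion.mpr ⟨k, ?_, ?_⟩
        · simp only [hKdef, Finset.mem_filter, Finset.mem_univ, true_and]
          exact ⟨j, hk⟩
        · simp only [hTdef, Finset.mem_filter, Finset.mem_univ, true_and]
          exact hk
    _ ≤ ∑ k ∈ K, (T k).card := Finset.card_biUnion_le
  have hT1 : ∀ k ∈ K.filter (fun k => typeI k), (T k).card ≤ 1 := by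
    intro k hk
    simp only [hKdef, Finset.mem_filter, Finset.mem_univ, true_and] at hk
    obtain ⟨u, huw, i, hsub⟩ := (hS k).1 hk.2
    apply Finset.card_le_one.mpr
    have key : ∀ j ∈ T k, j = i := by
      intro j hj
      simp only [hTdef, Finset.mem_filter, Finset.mem_univ, true_and] at hj
      rcases hsub hj with h | h
      · exact h.2
      · exact absurd h.1.symm (hv k)
    intro x hx y hy
    rw [key x hx, key y hy]
  have hT2 : ∀ k ∈ K.filter (fun k => ¬ typeI k), (T k).card ≤ 2 := by
    intro k hk
    simp only [hKdef, Finset.mem_filter, Finset.mem_univ, true_and] at hk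
    obtain ⟨i, i', _, hsub⟩ := (hS k).2 hk.2
    calc (T k).card ≤ ({i, i'} : Finset (Fin q)).card := by
          apply Finset.card_le_card
          intro j hj
          simp only [hTdef, Finset.mem_filter, Finset.mem_univ, true_and] at hj
          rcases hsub hj with h | h
          · simpa using h.2
          · exact absurd h.1.symm (hv k)
    _ ≤ 2 := Finset.card_insert_le _ _ |>.trans (by simp)
  have hsplit : ∑ k ∈ K, (T k).card
      = ∑ k ∈ K.filter (fun k => typeI k), (T k).card
        + ∑ k ∈ K.filter (fun k => ¬ typeI k), (T k).card := by
    rw [← Finset.sum_union (Finset.disjoint_filter_filter_not K K (fun k => typeI k)),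
      Finset.filter_union_filter_not_eq]
  have hsum1 : ∑ k ∈ K.filter (fun k => typeI k), (T k).card
      ≤ (K.filter (fun k => typeI k)).card := by
    calc ∑ k ∈ K.filter (fun k => typeI k), (T k).card
        ≤ ∑ _k ∈ K.filter (fun k => typeI k), 1 := Finset.sum_le_sum hT1
    _ = (K.filter (fun k => typeI k)).card := by simp
  have hsum2 : ∑ k ∈ K.filter (fun k => ¬ typeI k), (T k).card
      ≤ 2 * (K.filter (fun k => ¬ typeI k)).card := by
    calc ∑ k ∈ K.filter (fun k => ¬ typeI k), (T k).card
        ≤ ∑ _k ∈ K.filter (fun k => ¬ typeI k), 2 := Finset.sum_le_sum hT2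
    _ = 2 * (K.filter (fun k => ¬ typeI k)).card := by
        rw [Finset.sum_const, smul_eq_mul, mul_comm]
  -- identify the filtered cards with a + b and c
  have hFA : A.Finite := Set.toFinite A
  have hFB : B.Finite := Set.toFinite B
  have hFC : C.Finite := Set.toFinite C
  have hKAB : K.filter (fun k => typeI k) = hFA.toFinset ∪ hFB.toFinset := by
    ext k
    simp only [hKdef, Finset.mem_filter, Finset.mem_univ, true_and, Finset.mem_union,
      Set.Finite.mem_toFinset, hAdef, hBdef, Set.mem_setOf_eq]
    tauto
  have hKC : K.filter (fun k => ¬ typeI k) = hFC.toFinset := by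
    ext k
    simp only [hKdef, Finset.mem_filter, Finset.mem_univ, true_and,
      Set.Finite.mem_toFinset, hCdef, Set.mem_setOf_eq]
  have hcardAB : (K.filter (fun k => typeI k)).card = a + b := by
    rw [hKAB, Finset.card_union_of_disjoint, ha, hb,
      Set.ncard_eq_toFinset_card A hFA, Set.ncard_eq_toFinset_card B hFB]
    rw [Finset.disjoint_left]
    intro k hk hk'
    simp only [Set.Finite.mem_toFinset, hAdef, hBdef, Set.mem_setOf_eq] at hk hk'
    exact hk.2.2 hk'.2.2
  have hcardC : (K.filter (fun k => ¬ typeI k)).card = c := by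
    rw [hKC, hc, Set.ncard_eq_toFinset_card C hFC]
  have : q ≤ a + b + 2 * c := by
    rw [← hcardAB, ← hcardC]
    omega
  have := hdeg v
  omega
end
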